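/- Let A, G be d×d symmetric positive-definite matrices with A ⪯ G ⪯ ηA for some η ≥ 1, and let U ∈ ℝ^{d×k} be full rank with k ≤ d. Define the block BFGS update G₊ = G − GU(UᵀGU)⁻¹UᵀG + AU(UᵀAU)⁻¹UᵀA. Then A ⪯ G₊ ⪯ ηA. -/

import Mathlib

open Matrix

section BlockBFGSAux

lemma blockBFGS_real_conjT {m n : Type*} (M : Matrix m n ℝ) : Mᴴ = Mᵀ := by
  ext i j; simp [conjTranspose_apply]

lemma blockBFGS_isSymm_of_posDef {d : ℕ} {M : Matrix (Fin d) (Fin d) ℝ} (h : M.PosDef) :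
    Mᵀ = M := by
  rw [← blockBFGS_real_conjT]; exact h.1

lemma blockBFGS_posDef_smul {d : ℕ} {A : Matrix (Fin d) (Fin d) ℝ} (hA : A.PosDef)
    {c : ℝ} (hc : 0 < c) : (c • A).PosDef := by
  constructor
  · rw [IsHermitian, conjTranspose_smul, hA.1]
    simp
  · exact (hA.smul hc).2

lemma blockBFGS_posSemidef_smul {d : ℕ} {A : Matrix (Fin d) (Fin d) ℝ} (hA : A.PosSemidef)
    {c : ℝ} (hc : 0 ≤ c) : (c • A).PosSemidef := by
  constructor
  · rw [IsHermitian, conjTranspose_smul, hA.1]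
    simp
  · exact (hA.smul hc).2

lemma blockBFGS_mulVec_inj {d k : ℕ} (U : Matrix (Fin d) (Fin k) ℝ) (hU : U.rank = k) :
    Function.Injective U.mulVec := by
  have h := U.mulVecLin.finrank_range_add_finrank_ker
  rw [Module.finrank_pi, Fintype.card_fin, ← Matrix.rank, hU] at h
  have hker : LinearMap.ker U.mulVecLin = ⊥ := by
    apply Submodule.finrank_eq_zero.mp
    omega
  have := LinearMap.ker_eq_bot.mp hker
  exact this

lemma blockBFGS_conj_posDef {d k : ℕ} {A : Matrix (Fin d) (Fin d) ℝ} (hA : A.PosDef)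
    {U : Matrix (Fin d) (Fin k) ℝ} (hU : Function.Injective U.mulVec) :
    (Uᵀ * A * U).PosDef := by
  constructor
  · rw [← blockBFGS_real_conjT U]
    exact Matrix.isHermitian_conjTranspose_mul_mul U hA.1
  · have h2 := (hA.conjTranspose_mul_mul_same hU).2
    rwa [blockBFGS_real_conjT] at h2

lemma blockBFGS_key_identity {d k : ℕ} (A G : Matrix (Fin d) (Fin d) ℝ)
    (P Q : Matrix (Fin k) (Fin k) ℝ) (U : Matrix (Fin d) (Fin k) ℝ)
    (hP : ∀ X : Matrix (Fin k) (Fin d) ℝ, P * (Uᵀ * (G * (U * X))) = X)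
    (hQ : ∀ X : Matrix (Fin k) (Fin d) ℝ, Q * (Uᵀ * (A * (U * X))) = X)
    (hQ' : ∀ X : Matrix (Fin k) (Fin d) ℝ, Uᵀ * (A * (U * (Q * X))) = X) :
    (G - G * U * P * Uᵀ * G) - (A - A * U * Q * Uᵀ * A) =
      (1 - G * U * P * Uᵀ) * (G - A) * (1 - U * P * Uᵀ * G) +
      (G * U * P - A * U * Q) * (Uᵀ * A * U) * (P * Uᵀ * G - Q * Uᵀ * A) := by
  simp only [Matrix.mul_sub, Matrix.sub_mul, Matrix.mul_add, Matrix.add_mul,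
    Matrix.mul_one, Matrix.one_mul, Matrix.mul_assoc, hP, hQ, hQ']
  abel

/-- Monotonicity of `M ↦ M - MU(UᵀMU)⁻¹UᵀM` in the Loewner order. -/
lemma blockBFGS_phi_mono {d k : ℕ} {A G : Matrix (Fin d) (Fin d) ℝ}
    (hA : A.PosDef) (hG : G.PosDef) (hAG : (G - A).PosSemidef)
    {U : Matrix (Fin d) (Fin k) ℝ}
    (hSA : (Uᵀ * A * U).PosDef) (hSG : (Uᵀ * G * U).PosDef) :
    ((G - G * U * (Uᵀ * G * U)⁻¹ * Uᵀ * G) -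
      (A - A * U * (Uᵀ * A * U)⁻¹ * Uᵀ * A)).PosSemidef := by
  have hPl : (Uᵀ * G * U)⁻¹ * (Uᵀ * G * U) = 1 := nonsing_inv_mul _ hSG.det_pos.ne'.isUnit
  have hQl : (Uᵀ * A * U)⁻¹ * (Uᵀ * A * U) = 1 := nonsing_inv_mul _ hSA.det_pos.ne'.isUnit
  have hQr : (Uᵀ * A * U) * (Uᵀ * A * U)⁻¹ = 1 := mul_nonsing_inv _ hSA.det_pos.ne'.isUnit
  have hP : ∀ X : Matrix (Fin k) (Fin d) ℝ, (Uᵀ * G * U)⁻¹ * (Uᵀ * (G * (U * X))) = X := by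
    intro X
    calc (Uᵀ * G * U)⁻¹ * (Uᵀ * (G * (U * X))) = ((Uᵀ * G * U)⁻¹ * (Uᵀ * G * U)) * X := by
          simp only [Matrix.mul_assoc]
      _ = X := by rw [hPl, Matrix.one_mul]
  have hQ : ∀ X : Matrix (Fin k) (Fin d) ℝ, (Uᵀ * A * U)⁻¹ * (Uᵀ * (A * (U * X))) = X := by
    intro X
    calc (Uᵀ * A * U)⁻¹ * (Uᵀ * (A * (U * X))) = ((Uᵀ * A * U)⁻¹ * (Uᵀ * A * U)) * X := by
          simp only [Matrix.mul_assoc]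
      _ = X := by rw [hQl, Matrix.one_mul]
  have hQ' : ∀ X : Matrix (Fin k) (Fin d) ℝ, Uᵀ * (A * (U * ((Uᵀ * A * U)⁻¹ * X))) = X := by
    intro X
    calc Uᵀ * (A * (U * ((Uᵀ * A * U)⁻¹ * X))) = ((Uᵀ * A * U) * (Uᵀ * A * U)⁻¹) * X := by
          simp only [Matrix.mul_assoc]
      _ = X := by rw [hQr, Matrix.one_mul]
  have hPt : ((Uᵀ * G * U)⁻¹)ᵀ = (Uᵀ * G * U)⁻¹ := by
    rw [transpose_nonsing_inv]
    congr 1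
    rw [transpose_mul, transpose_mul, transpose_transpose, blockBFGS_isSymm_of_posDef hG,
      Matrix.mul_assoc]
  have hQt : ((Uᵀ * A * U)⁻¹)ᵀ = (Uᵀ * A * U)⁻¹ := by
    rw [transpose_nonsing_inv]
    congr 1
    rw [transpose_mul, transpose_mul, transpose_transpose, blockBFGS_isSymm_of_posDef hA,
      Matrix.mul_assoc]
  rw [blockBFGS_key_identity A G (Uᵀ * G * U)⁻¹ (Uᵀ * A * U)⁻¹ U hP hQ hQ']
  apply Matrix.PosSemidef.add
  · have hBt : (1 - U * (Uᵀ * G * U)⁻¹ * Uᵀ * G)ᴴ = 1 - G * U * (Uᵀ * G * U)⁻¹ * Uᵀ := by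
      rw [blockBFGS_real_conjT, transpose_sub, transpose_one, transpose_mul, transpose_mul,
        transpose_mul, transpose_transpose, hPt, blockBFGS_isSymm_of_posDef hG]
      simp only [Matrix.mul_assoc]
    have := hAG.conjTranspose_mul_mul_same (1 - U * (Uᵀ * G * U)⁻¹ * Uᵀ * G)
    rwa [hBt] at this
  · have hBt : ((Uᵀ * G * U)⁻¹ * Uᵀ * G - (Uᵀ * A * U)⁻¹ * Uᵀ * A)ᴴ =
        G * U * (Uᵀ * G * U)⁻¹ - A * U * (Uᵀ * A * U)⁻¹ := by
      rw [blockBFGS_real_conjT, transpose_sub, transpose_mul, transpose_mul, transpose_mul,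
        transpose_mul, transpose_transpose, hPt, hQt, blockBFGS_isSymm_of_posDef hG,
        blockBFGS_isSymm_of_posDef hA]
      simp only [Matrix.mul_assoc]
    have := hSA.posSemidef.conjTranspose_mul_mul_same
      ((Uᵀ * G * U)⁻¹ * Uᵀ * G - (Uᵀ * A * U)⁻¹ * Uᵀ * A)
    rwa [hBt] at this

/-- `AU(UᵀAU)⁻¹UᵀA` is positive semidefinite. -/
lemma blockBFGS_psi_psd {d k : ℕ} {A : Matrix (Fin d) (Fin d) ℝ} (hA : A.PosDef)
    {U : Matrix (Fin d) (Fin k) ℝ} (hSA : (Uᵀ * A * U).PosDef) :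
    (A * U * (Uᵀ * A * U)⁻¹ * Uᵀ * A).PosSemidef := by
  have := hSA.inv.posSemidef.conjTranspose_mul_mul_same (Uᵀ * A)
  have hBt : (Uᵀ * A)ᴴ = A * U := by
    rw [blockBFGS_real_conjT, transpose_mul, transpose_transpose, blockBFGS_isSymm_of_posDef hA]
  rw [hBt] at this
  have e : (A * U) * (Uᵀ * A * U)⁻¹ * (Uᵀ * A) = A * U * (Uᵀ * A * U)⁻¹ * Uᵀ * A := by
    simp only [Matrix.mul_assoc]
  rwa [e] at this

end BlockBFGSAux

/-- **Lemma 5.2 (block BFGS part)**: if `A ⪯ G ⪯ ηA` then the block BFGS update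
`G₊ = G − GU(UᵀGU)⁻¹UᵀG + AU(UᵀAU)⁻¹UᵀA` satisfies `A ⪯ G₊ ⪯ ηA`. -/
theorem blockBFGS_loewner_bounds {d k : ℕ} (hk : k ≤ d)
    (A G : Matrix (Fin d) (Fin d) ℝ) (hA : A.PosDef) (hG : G.PosDef)
    (η : ℝ) (hη : 1 ≤ η)
    (hAG : (G - A).PosSemidef) (hGη : (η • A - G).PosSemidef)
    (U : Matrix (Fin d) (Fin k) ℝ) (hU : U.rank = k) :
    ((G - G * U * (Uᵀ * G * U)⁻¹ * Uᵀ * G + A * U * (Uᵀ * A * U)⁻¹ * Uᵀ * A) - A).PosSemidef ∧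
      (η • A -
        (G - G * U * (Uᵀ * G * U)⁻¹ * Uᵀ * G + A * U * (Uᵀ * A * U)⁻¹ * Uᵀ * A)).PosSemidef := by
  have hη0 : (0 : ℝ) < η := lt_of_lt_of_le one_pos hη
  have hUinj := blockBFGS_mulVec_inj U hU
  have hSA : (Uᵀ * A * U).PosDef := blockBFGS_conj_posDef hA hUinj
  have hSG : (Uᵀ * G * U).PosDef := blockBFGS_conj_posDef hG hUinj
  have hηA : (η • A).PosDef := blockBFGS_posDef_smul hA hη0
  have hSηA : (Uᵀ * (η • A) * U).PosDef := blockBFGS_conj_posDef hηA hUinj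
  constructor
  · have e1 : (G - G * U * (Uᵀ * G * U)⁻¹ * Uᵀ * G + A * U * (Uᵀ * A * U)⁻¹ * Uᵀ * A) - A =
        (G - G * U * (Uᵀ * G * U)⁻¹ * Uᵀ * G) - (A - A * U * (Uᵀ * A * U)⁻¹ * Uᵀ * A) := by
      abel
    rw [e1]
    exact blockBFGS_phi_mono hA hG hAG hSA hSG
  · have h2 := blockBFGS_phi_mono hG hηA hGη hSG hSηA
    -- compute the inverse of `Uᵀ (η•A) U`
    have hsm : Uᵀ * (η • A) * U = η • (Uᵀ * A * U) := by
      rw [Matrix.mul_smul, Matrix.smul_mul]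
    have hinv : (Uᵀ * (η • A) * U)⁻¹ = η⁻¹ • (Uᵀ * A * U)⁻¹ := by
      rw [hsm]
      apply Matrix.inv_eq_right_inv
      rw [Matrix.smul_mul, Matrix.mul_smul, smul_smul,
        mul_nonsing_inv _ hSA.det_pos.ne'.isUnit, mul_inv_cancel₀ hη0.ne', one_smul]
    have hpsi : (η • A) * U * (Uᵀ * (η • A) * U)⁻¹ * Uᵀ * (η • A) =
        η • (A * U * (Uᵀ * A * U)⁻¹ * Uᵀ * A) := by
      rw [hinv]
      simp only [Matrix.smul_mul, Matrix.mul_smul, smul_smul]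
      congr 1
      field_simp
    rw [hpsi] at h2
    have e2 : η • A -
        (G - G * U * (Uᵀ * G * U)⁻¹ * Uᵀ * G + A * U * (Uᵀ * A * U)⁻¹ * Uᵀ * A) =
        ((η • A - η • (A * U * (Uᵀ * A * U)⁻¹ * Uᵀ * A)) -
          (G - G * U * (Uᵀ * G * U)⁻¹ * Uᵀ * G)) +
        (η - 1) • (A * U * (Uᵀ * A * U)⁻¹ * Uᵀ * A) := by
      rw [sub_smul, one_smul]
      abel
    rw [e2]
    exact h2.add (blockBFGS_posSemidef_smul (blockBFGS_psi_psd hA hSA) (by linarith))
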